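/- In the no-sharing game, if an interior pair (m_i, m_j) with 0 < m_i, m_j < m_0 satisfies both insurers' first-order conditions, then (2x_i - σ)²/(x_i - σ) = (2x_j - σ)²/(x_j - σ) where x_k = m_k + σ; consequently either m_i = m_j or m_j = σ²/(4 m_i). -/

import Mathlib

/-- No-sharing game: if an interior pair `(mi, mj)` with `0 < mi, mj < m₀` satisfies
both insurers' first-order conditions
`1/((xᵢ-σ) log α) = (σ²/b)·((4xⱼxᵢ+σ²)/(4xⱼxᵢ-σ²))·((2xⱼ-σ)²/(4xⱼxᵢ-σ²)²)`
(and symmetrically), where `xₖ = mₖ + σ`, then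
`(2xᵢ-σ)²/(xᵢ-σ) = (2xⱼ-σ)²/(xⱼ-σ)`; consequently `mi = mj` or `mj = σ²/(4mi)`. -/
theorem stmt_15 (σ b α m0 mi mj : ℝ) (hσ : 0 < σ) (hb : 0 < b) (hα : 1 < α)
    (hm0 : 0 < m0) (hmi : 0 < mi) (hmi' : mi < m0) (hmj : 0 < mj) (hmj' : mj < m0)
    (xi xj : ℝ) (hxi : xi = mi + σ) (hxj : xj = mj + σ)
    (hFOCi : 1 / ((xi - σ) * Real.log α)
        = (σ ^ 2 / b) * ((4 * xj * xi + σ ^ 2) / (4 * xj * xi - σ ^ 2))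
            * ((2 * xj - σ) ^ 2 / (4 * xj * xi - σ ^ 2) ^ 2))
    (hFOCj : 1 / ((xj - σ) * Real.log α)
        = (σ ^ 2 / b) * ((4 * xi * xj + σ ^ 2) / (4 * xi * xj - σ ^ 2))
            * ((2 * xi - σ) ^ 2 / (4 * xi * xj - σ ^ 2) ^ 2)) :
    (2 * xi - σ) ^ 2 / (xi - σ) = (2 * xj - σ) ^ 2 / (xj - σ) ∧
    (mi = mj ∨ mj = σ ^ 2 / (4 * mi)) := by
  subst hxi hxj
  have hL : 0 < Real.log α := Real.log_pos hα
  have hD : 0 < 4 * (mj + σ) * (mi + σ) - σ ^ 2 := by nlinarith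
  have hD' : 4 * (mj + σ) * (mi + σ) - σ ^ 2 ≠ 0 := ne_of_gt hD
  have hD2' : 4 * (mi + σ) * (mj + σ) - σ ^ 2 ≠ 0 := by
    rw [show 4*(mi+σ)*(mj+σ) = 4*(mj+σ)*(mi+σ) by ring]; exact hD'
  have hxi' : mi + σ - σ ≠ 0 := by simpa using ne_of_gt hmi
  have hxj' : mj + σ - σ ≠ 0 := by simpa using ne_of_gt hmj
  field_simp at hFOCi hFOCj
  have h0 : σ ^ 2 * (4 * (mj + σ) * (mi + σ) + σ ^ 2) * Real.log α *
      (mi * (2 * (mj + σ) - σ) ^ 2 - mj * (2 * (mi + σ) - σ) ^ 2) = 0 := by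
    have hD3 : ((mi + σ) * 4 * (mj + σ) - σ ^ 2) ^ 3 ≠ 0 := pow_ne_zero 3 (ne_of_gt (by nlinarith))
    rw [eq_div_iff hD3] at hFOCi hFOCj
    linear_combination hFOCj - hFOCi
  have hfac : σ ^ 2 * (4 * (mj + σ) * (mi + σ) + σ ^ 2) * Real.log α ≠ 0 := by
    have : 0 < 4 * (mj + σ) * (mi + σ) + σ ^ 2 := by nlinarith
    positivity
  have key : mi * (2 * (mj + σ) - σ) ^ 2 = mj * (2 * (mi + σ) - σ) ^ 2 := by
    have := (mul_eq_zero.mp h0).resolve_left hfac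
    linarith
  constructor
  · rw [div_eq_div_iff hxi' hxj']
    linear_combination -key
  · have h1 : (mi - mj) * (4 * mi * mj - σ ^ 2) = 0 := by linear_combination -key
    rcases mul_eq_zero.mp h1 with h | h
    · left; linarith
    · right
      field_simp
      linarith
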